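/- Let (P_n) and (Q_n) be sequences of monic polynomials related by P_n + Σ_{i=1}^N r_{i,n} P_{n-i} = Q_n + Σ_{i=1}^M s_{i,n} Q_{n-i} for all n ≥ 0, and suppose (P_n) is orthogonal with respect to the linear functional u. For n ≥ M-1 let B̃_n be the M×M matrix with (j,k) entry ⟨P̄_{M-k} u, Q_{n-j+1}⟩ (where P̄_i = P_i/⟨u, P_i²⟩). Then det B̃_n = (-1)^M s_{M,n} · det B̃_{n-1} for all n ≥ M+N. -/

import Mathlib

open Polynomial

/-- Lemma 2.1 (b): determinant recursion for the matrices `B̃_n` when `(P n)` is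
orthogonal with respect to `u`. -/
theorem det_Btilde_recursion
    (N M : ℕ) (hM : 1 ≤ M)
    (u : Polynomial ℂ →ₗ[ℂ] ℂ)
    (P Q : ℕ → Polynomial ℂ) (r s : ℕ → ℕ → ℂ)
    (hPmonic : ∀ n, (P n).Monic) (hPdeg : ∀ n, (P n).degree = n)
    (hQmonic : ∀ n, (Q n).Monic) (hQdeg : ∀ n, (Q n).degree = n)
    (horth : ∀ m n, m ≠ n → u (P m * P n) = 0)
    (hreg : ∀ n, u (P n ^ 2) ≠ 0)
    (hrz : ∀ i n, n < i → r i n = 0) (hsz : ∀ i n, n < i → s i n = 0)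
    (hrel : ∀ n, P n + ∑ i ∈ Finset.Icc 1 N, r i n • P (n - i)
        = Q n + ∑ i ∈ Finset.Icc 1 M, s i n • Q (n - i))
    (Bt : ℕ → Matrix (Fin M) (Fin M) ℂ)
    (hBt : ∀ n, ∀ j k : Fin M, Bt n j k
        = u (P (M - 1 - (k : ℕ)) * Q (n - (j : ℕ))) / u (P (M - 1 - (k : ℕ)) ^ 2)) :
    ∀ n, M + N ≤ n → (Bt n).det = (-1) ^ M * s M n * (Bt (n - 1)).det := by
  intro n hn
  have hn1 : 1 ≤ n := le_trans (le_trans hM (Nat.le_add_right M N)) hn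
  set C : Matrix (Fin M) (Fin M) ℂ := fun j i =>
    if (j : ℕ) = 0 then -s ((i : ℕ) + 1) n
    else if (i : ℕ) = (j : ℕ) - 1 then 1 else 0 with hC
  have hfact : Bt n = C * Bt (n - 1) := by
    ext j k
    rw [Matrix.mul_apply]
    by_cases hj : (j : ℕ) = 0
    · -- row 0
      have hkey : u (P (M - 1 - (k : ℕ)) * Q n)
          = - ∑ i ∈ Finset.Icc 1 M, s i n * u (P (M - 1 - (k : ℕ)) * Q (n - i)) := by
        have h := congrArg (fun q => u (P (M - 1 - (k : ℕ)) * q)) (hrel n)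
        simp only [mul_add, map_add, Finset.mul_sum, map_sum, mul_smul_comm, map_smul,
          smul_eq_mul] at h
        rw [horth (M - 1 - (k : ℕ)) n (by omega)] at h
        rw [Finset.sum_eq_zero (fun i hi => ?_)] at h
        · linear_combination -h
        · simp only [Finset.mem_Icc] at hi
          rw [horth (M - 1 - (k : ℕ)) (n - i) (by omega), mul_zero]
      have hR : ∀ i : Fin M, C j i * Bt (n-1) i k
          = -(s ((i:ℕ)+1) n * (u (P (M - 1 - (k : ℕ)) * Q (n - ((i:ℕ)+1)))
              / u (P (M - 1 - (k : ℕ)) ^ 2))) := by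
        intro i
        rw [hBt]
        simp only [hC, hj]
        rw [if_true]
        have h2 : n - 1 - (i : ℕ) = n - ((i:ℕ)+1) := by omega
        rw [h2]
        ring
      have hsum : ∑ i ∈ Finset.Icc 1 M, s i n * u (P (M - 1 - (k : ℕ)) * Q (n - i))
          = ∑ i : Fin M, s ((i:ℕ)+1) n * u (P (M - 1 - (k : ℕ)) * Q (n - ((i:ℕ)+1))) := by
        rw [Fin.sum_univ_eq_sum_range
            (fun i => s (i+1) n * u (P (M - 1 - (k : ℕ)) * Q (n - (i+1)))) M,
          ← Finset.Ico_add_one_right_eq_Icc, Finset.sum_Ico_eq_sum_range, Nat.add_sub_cancel]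
        exact Finset.sum_congr rfl (fun i _ => by rw [Nat.add_comm 1 i])
      simp only [hR]
      rw [hBt]
      simp only [hj, Nat.sub_zero]
      rw [hkey, hsum, neg_div, Finset.sum_div, ← Finset.sum_neg_distrib]
      exact Finset.sum_congr rfl (fun i _ => by ring)
    · -- row j ≥ 1
      have hj1 : 1 ≤ (j : ℕ) := Nat.pos_of_ne_zero hj
      have hjM : (j : ℕ) < M := j.isLt
      rw [Finset.sum_eq_single (⟨(j:ℕ) - 1, by omega⟩ : Fin M)]
      · simp only [hC, Fin.val_mk]
        rw [if_neg hj, if_true, one_mul, hBt, hBt]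
        have h3 : n - (j : ℕ) = n - 1 - ((j:ℕ) - 1) := by omega
        rw [h3]
      · intro b _ hb
        simp only [hC]
        rw [if_neg hj, if_neg, zero_mul]
        intro hcon
        apply hb
        exact Fin.ext hcon
      · intro h
        exact absurd (Finset.mem_univ _) h
  have hdetC : C.det = (-1) ^ M * s M n := by
    obtain ⟨m, rfl⟩ : ∃ m, M = m + 1 := ⟨M - 1, by omega⟩
    rw [Matrix.det_succ_column C (Fin.last m)]
    rw [Finset.sum_eq_single (0 : Fin (m+1))]
    · have hsub : C.submatrix (Fin.succAbove 0) (Fin.succAbove (Fin.last m)) = 1 := by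
        ext a b
        rw [Matrix.submatrix_apply]
        simp only [Matrix.submatrix_apply, Fin.succAbove_zero, Fin.succAbove_last, hC,
          Fin.val_succ, Fin.coe_castSucc, Matrix.one_apply]
        rw [if_neg (by omega)]
        simp only [Nat.add_sub_cancel]
        by_cases h : (a : ℕ) = (b : ℕ)
        · rw [if_pos h.symm, if_pos (Fin.ext h)]
        · rw [if_neg (fun hc => h hc.symm), if_neg (fun hc => h (Fin.val_eq_of_eq hc))]
      rw [hsub, Matrix.det_one, mul_one]
      have hC0 : C 0 (Fin.last m) = -s (m + 1) n := by
        simp [hC]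
      rw [hC0]
      simp only [Fin.val_zero, Fin.val_last, zero_add, pow_succ]
      ring
    · intro b _ hb
      have hb0 : (b : ℕ) ≠ 0 := fun h => hb (Fin.ext (by simpa using h))
      have hble : (b : ℕ) ≤ m := Fin.is_le b
      simp only [hC, Fin.val_last]
      rw [if_neg hb0, if_neg (by omega), mul_zero, zero_mul]
    · intro h
      exact absurd (Finset.mem_univ _) h
  rw [hfact, Matrix.det_mul, hdetC]
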